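/- arXiv:2404.11552 — 2 statements merged into one kernel-verified Lean document; each statement's English description precedes it below -/
import Mathlib

section
/- Let (X, ℱ, μ₀) be a probability space, Φ₁, Φ₂: X → ℝ measurable with 0 ≤ Φᵢ ≤ K, and Zᵢ = ∫ exp(−Φᵢ) dμ₀ > 0. Define posterior measures μᵢ with dμᵢ/dμ₀ = Zᵢ^{−1} exp(−Φᵢ). If |Φ₁(x) − Φ₂(x)| ≤ δ for all x ∈ X, then the squared Hellinger distance satisfies d_Hell(μ₁, μ₂)² ≤ C(K)·δ², where C(K) is a constant depending only on K. -/
open MeasureTheory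

/-- Lipschitz bound for `exp ∘ neg` on nonnegatives. -/
lemma exp_neg_lip (a b : ℝ) (ha : 0 ≤ a) (hb : 0 ≤ b) :
    |Real.exp (-a) - Real.exp (-b)| ≤ |a - b| := by
  wlog h : b ≤ a generalizing a b
  · rw [abs_sub_comm, abs_sub_comm a b]
    exact this b a hb ha (le_of_not_ge h)
  have h1 : Real.exp (-a) ≤ Real.exp (-b) := Real.exp_le_exp.2 (by linarith)
  have h2 : Real.exp (-b) ≤ 1 := Real.exp_le_one_iff.2 (by linarith)
  have h3 : (b - a) + 1 ≤ Real.exp (b - a) := by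
    have := Real.add_one_le_exp (b - a); linarith
  have h4 : Real.exp (-b) * Real.exp (b - a) = Real.exp (-a) := by
    rw [← Real.exp_add]; ring_nf
  have h5 : 0 < Real.exp (-b) := Real.exp_pos _
  rw [abs_of_nonpos (by linarith), abs_of_nonneg (by linarith)]
  nlinarith

/-- Lipschitz bound for `sqrt` away from zero. -/
lemma sqrt_lip (m x y : ℝ) (hm : 0 < m) (hx : m ≤ x) (hy : m ≤ y) :
    |Real.sqrt x - Real.sqrt y| ≤ |x - y| / (2 * Real.sqrt m) := by
  have hmx : (0:ℝ) ≤ x := le_trans hm.le hx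
  have hmy : (0:ℝ) ≤ y := le_trans hm.le hy
  have hsm : 0 < Real.sqrt m := Real.sqrt_pos.2 hm
  have hsum : 2 * Real.sqrt m ≤ Real.sqrt x + Real.sqrt y := by
    have := Real.sqrt_le_sqrt hx
    have := Real.sqrt_le_sqrt hy
    linarith
  rw [le_div_iff₀ (by linarith)]
  have hkey : |Real.sqrt x - Real.sqrt y| * (Real.sqrt x + Real.sqrt y) = |x - y| := by
    rw [← abs_of_nonneg (by positivity : (0:ℝ) ≤ Real.sqrt x + Real.sqrt y), ← abs_mul]
    congr 1
    have hx2 : Real.sqrt x ^ 2 = x := Real.sq_sqrt hmx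
    have hy2 : Real.sqrt y ^ 2 = y := Real.sq_sqrt hmy
    nlinarith
  calc |Real.sqrt x - Real.sqrt y| * (2 * Real.sqrt m)
      ≤ |Real.sqrt x - Real.sqrt y| * (Real.sqrt x + Real.sqrt y) :=
        mul_le_mul_of_nonneg_left hsum (abs_nonneg _)
    _ = |x - y| := hkey

lemma sq_sqrt_diff_le (m c x y : ℝ) (hm : 0 < m) (hx : m ≤ x) (hy : m ≤ y)
    (hd : |x - y| ≤ c) :
    (Real.sqrt x - Real.sqrt y) ^ 2 ≤ (c / (2 * Real.sqrt m)) ^ 2 := by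
  have hsm : 0 < Real.sqrt m := Real.sqrt_pos.2 hm
  have h1 : |Real.sqrt x - Real.sqrt y| ≤ c / (2 * Real.sqrt m) :=
    le_trans (sqrt_lip m x y hm hx hy) (by
      apply div_le_div_of_nonneg_right hd <;> linarith)
  calc (Real.sqrt x - Real.sqrt y) ^ 2 = |Real.sqrt x - Real.sqrt y| ^ 2 := (sq_abs _).symm
    _ ≤ (c / (2 * Real.sqrt m)) ^ 2 := pow_le_pow_left₀ (abs_nonneg _) h1 2

theorem hellinger_wellposedness (K : ℝ) (hK : 0 ≤ K) :
    ∃ C : ℝ, 0 < C ∧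
      ∀ (X : Type) (_ : MeasurableSpace X) (μ₀ : Measure X),
        IsProbabilityMeasure μ₀ →
        ∀ (Φ₁ Φ₂ : X → ℝ) (δ : ℝ), Measurable Φ₁ → Measurable Φ₂ →
        (∀ x, 0 ≤ Φ₁ x ∧ Φ₁ x ≤ K) → (∀ x, 0 ≤ Φ₂ x ∧ Φ₂ x ≤ K) →
        (0 < ∫ x, Real.exp (-Φ₁ x) ∂μ₀) → (0 < ∫ x, Real.exp (-Φ₂ x) ∂μ₀) →
        (∀ x, |Φ₁ x - Φ₂ x| ≤ δ) →
        (1 / 2) * ∫ x,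
            (Real.sqrt ((∫ y, Real.exp (-Φ₁ y) ∂μ₀)⁻¹ * Real.exp (-Φ₁ x)) -
              Real.sqrt ((∫ y, Real.exp (-Φ₂ y) ∂μ₀)⁻¹ * Real.exp (-Φ₂ x))) ^ 2 ∂μ₀ ≤
          C * δ ^ 2 := by
  refine ⟨Real.exp (5 * K), Real.exp_pos _, ?_⟩
  intro X mX μ₀ hμ Φ₁ Φ₂ δ hm₁ hm₂ hΦ₁ hΦ₂ hZ₁pos hZ₂pos hδb
  set Z₁ := ∫ y, Real.exp (-Φ₁ y) ∂μ₀ with hZ₁def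
  set Z₂ := ∫ y, Real.exp (-Φ₂ y) ∂μ₀ with hZ₂def
  set L := Real.exp K with hLdef
  have hL1 : 1 ≤ L := Real.one_le_exp hK
  have hLpos : 0 < L := Real.exp_pos _
  -- X is nonempty, hence δ ≥ 0
  have hne : Nonempty X := by
    by_contra h
    rw [not_nonempty_iff] at h
    have : Z₁ = 0 := by
      rw [hZ₁def]
      exact integral_of_isEmpty
    linarith
  obtain ⟨x₀⟩ := hne
  clear_value Z₁ Z₂ L
  have hδ0 : 0 ≤ δ := le_trans (abs_nonneg _) (hδb x₀)
  -- integrability of exp(-Φᵢ)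
  have hI₁ : Integrable (fun x => Real.exp (-Φ₁ x)) μ₀ := by
    refine Integrable.mono' (integrable_const (1:ℝ))
      ((hm₁.neg.exp).aestronglyMeasurable) (ae_of_all _ fun x => ?_)
    rw [Real.norm_eq_abs, abs_of_nonneg (Real.exp_pos _).le]
    exact Real.exp_le_one_iff.2 (by linarith [(hΦ₁ x).1])
  have hI₂ : Integrable (fun x => Real.exp (-Φ₂ x)) μ₀ := by
    refine Integrable.mono' (integrable_const (1:ℝ))
      ((hm₂.neg.exp).aestronglyMeasurable) (ae_of_all _ fun x => ?_)
    rw [Real.norm_eq_abs, abs_of_nonneg (Real.exp_pos _).le]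
    exact Real.exp_le_one_iff.2 (by linarith [(hΦ₂ x).1])
  -- bounds on Z₁, Z₂
  have hZ₁ge : Real.exp (-K) ≤ Z₁ := by
    have := integral_mono (integrable_const (Real.exp (-K))) hI₁
      (fun x => Real.exp_le_exp.2 (by linarith [(hΦ₁ x).2]))
    rw [hZ₁def]; simpa using this
  have hZ₂ge : Real.exp (-K) ≤ Z₂ := by
    have := integral_mono (integrable_const (Real.exp (-K))) hI₂
      (fun x => Real.exp_le_exp.2 (by linarith [(hΦ₂ x).2]))
    rw [hZ₂def]; simpa using this
  have hZ₁le : Z₁ ≤ 1 := by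
    have := integral_mono hI₁ (integrable_const (1:ℝ))
      (fun x => Real.exp_le_one_iff.2 (by linarith [(hΦ₁ x).1]))
    rw [hZ₁def]; simpa using this
  have hZ₂le : Z₂ ≤ 1 := by
    have := integral_mono hI₂ (integrable_const (1:ℝ))
      (fun x => Real.exp_le_one_iff.2 (by linarith [(hΦ₂ x).1]))
    rw [hZ₂def]; simpa using this
  have hexpK : Real.exp (-K) = L⁻¹ := by rw [hLdef, Real.exp_neg]
  have hinv₁le : Z₁⁻¹ ≤ L := by
    rw [← inv_inv L]
    exact inv_anti₀ (by positivity) (hexpK ▸ hZ₁ge)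
  have hinv₂le : Z₂⁻¹ ≤ L := by
    rw [← inv_inv L]
    exact inv_anti₀ (by positivity) (hexpK ▸ hZ₂ge)
  have hinv₁ge : 1 ≤ Z₁⁻¹ := by
    rw [← inv_one]
    exact inv_anti₀ hZ₁pos hZ₁le
  have hinv₂ge : 1 ≤ Z₂⁻¹ := by
    rw [← inv_one]
    exact inv_anti₀ hZ₂pos hZ₂le
  -- |Z₁ - Z₂| ≤ δ
  have hZdiff : |Z₁ - Z₂| ≤ δ := by
    have h1 : Z₁ - Z₂ = ∫ x, (Real.exp (-Φ₁ x) - Real.exp (-Φ₂ x)) ∂μ₀ := by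
      rw [hZ₁def, hZ₂def]; exact (integral_sub hI₁ hI₂).symm
    rw [h1]
    calc |∫ x, (Real.exp (-Φ₁ x) - Real.exp (-Φ₂ x)) ∂μ₀|
        ≤ ∫ x, |Real.exp (-Φ₁ x) - Real.exp (-Φ₂ x)| ∂μ₀ := by
          simpa [Real.norm_eq_abs] using
            norm_integral_le_integral_norm (fun x => Real.exp (-Φ₁ x) - Real.exp (-Φ₂ x)) (μ := μ₀)
      _ ≤ ∫ _x, δ ∂μ₀ := by
          refine integral_mono (hI₁.sub hI₂).abs (integrable_const δ) (fun x => ?_)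
          exact le_trans (exp_neg_lip _ _ (hΦ₁ x).1 (hΦ₂ x).1) (hδb x)
      _ = δ := by simp
  -- |Z₁⁻¹ - Z₂⁻¹| ≤ L * L * δ
  have hinvdiff : |Z₁⁻¹ - Z₂⁻¹| ≤ L * L * δ := by
    have hid : Z₁⁻¹ - Z₂⁻¹ = (Z₂ - Z₁) * Z₁⁻¹ * Z₂⁻¹ := by
      field_simp
    rw [hid, abs_mul, abs_mul, abs_of_nonneg (by positivity : (0:ℝ) ≤ Z₁⁻¹),
      abs_of_nonneg (by positivity : (0:ℝ) ≤ Z₂⁻¹), abs_sub_comm]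
    calc |Z₁ - Z₂| * Z₁⁻¹ * Z₂⁻¹ ≤ δ * L * L := by
          apply mul_le_mul (mul_le_mul hZdiff hinv₁le (by positivity) hδ0) hinv₂le
            (by positivity) (by positivity)
      _ = L * L * δ := by ring
  -- pointwise bound on the integrand
  have hpt : ∀ x,
      (Real.sqrt (Z₁⁻¹ * Real.exp (-Φ₁ x)) - Real.sqrt (Z₂⁻¹ * Real.exp (-Φ₂ x))) ^ 2 ≤
        Real.exp (5 * K) * δ ^ 2 := by
    intro x
    have he₁ : Real.exp (-K) ≤ Real.exp (-Φ₁ x) := Real.exp_le_exp.2 (by linarith [(hΦ₁ x).2])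
    have he₂ : Real.exp (-K) ≤ Real.exp (-Φ₂ x) := Real.exp_le_exp.2 (by linarith [(hΦ₂ x).2])
    have he₁' : Real.exp (-Φ₁ x) ≤ 1 := Real.exp_le_one_iff.2 (by linarith [(hΦ₁ x).1])
    have he₂' : Real.exp (-Φ₂ x) ≤ 1 := Real.exp_le_one_iff.2 (by linarith [(hΦ₂ x).1])
    have hmpos : 0 < Real.exp (-K) := Real.exp_pos _
    have hx1 : Real.exp (-K) ≤ Z₁⁻¹ * Real.exp (-Φ₁ x) := by nlinarith
    have hx2 : Real.exp (-K) ≤ Z₂⁻¹ * Real.exp (-Φ₂ x) := by nlinarith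
    have hargdiff : |Z₁⁻¹ * Real.exp (-Φ₁ x) - Z₂⁻¹ * Real.exp (-Φ₂ x)| ≤ 2 * L * L * δ := by
      have h1 : Z₁⁻¹ * Real.exp (-Φ₁ x) - Z₂⁻¹ * Real.exp (-Φ₂ x) =
          Z₁⁻¹ * (Real.exp (-Φ₁ x) - Real.exp (-Φ₂ x)) +
            (Z₁⁻¹ - Z₂⁻¹) * Real.exp (-Φ₂ x) := by ring
      rw [h1]
      have h2 : |Z₁⁻¹ * (Real.exp (-Φ₁ x) - Real.exp (-Φ₂ x))| ≤ L * δ := by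
        rw [abs_mul, abs_of_nonneg (by positivity : (0:ℝ) ≤ Z₁⁻¹)]
        have hd := le_trans (exp_neg_lip _ _ (hΦ₁ x).1 (hΦ₂ x).1) (hδb x)
        exact mul_le_mul hinv₁le hd (abs_nonneg _) hLpos.le
      have h3 : |(Z₁⁻¹ - Z₂⁻¹) * Real.exp (-Φ₂ x)| ≤ L * L * δ := by
        rw [abs_mul, abs_of_nonneg (Real.exp_pos _).le]
        nlinarith [abs_nonneg (Z₁⁻¹ - Z₂⁻¹), Real.exp_pos (-Φ₂ x)]
      have h4 := abs_add_le (Z₁⁻¹ * (Real.exp (-Φ₁ x) - Real.exp (-Φ₂ x)))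
        ((Z₁⁻¹ - Z₂⁻¹) * Real.exp (-Φ₂ x))
      nlinarith [mul_nonneg (mul_nonneg (sub_nonneg.2 hL1) hLpos.le) hδ0]
    have hmain := sq_sqrt_diff_le (Real.exp (-K)) (2 * L * L * δ) _ _ hmpos hx1 hx2 hargdiff
    refine le_trans hmain ?_
    have hsqrtm : Real.sqrt (Real.exp (-K)) = Real.exp (-(K/2)) := by
      rw [show Real.exp (-K) = (Real.exp (-(K/2))) ^ 2 by
        rw [sq, ← Real.exp_add]; congr 1; ring]
      exact Real.sqrt_sq (Real.exp_pos _).le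
    have hne2 : Real.exp (K/2) ≠ 0 := (Real.exp_pos _).ne'
    have hEq : 2 * L * L * δ / (2 * Real.sqrt (Real.exp (-K))) =
        Real.exp (5 * K / 2) * δ := by
      rw [hsqrtm, Real.exp_neg, hLdef,
        show Real.exp (5 * K / 2) = Real.exp K * Real.exp K * Real.exp (K/2) by
          rw [← Real.exp_add, ← Real.exp_add]; congr 1; ring]
      field_simp
    rw [hEq, mul_pow,
      show Real.exp (5 * K / 2) ^ 2 = Real.exp (5 * K) by
        rw [sq, ← Real.exp_add]; congr 1; ring]
  -- integrate
  have hIconst : Integrable (fun _x : X => Real.exp (5 * K) * δ ^ 2) μ₀ := integrable_const _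
  have hInt : (∫ x, (Real.sqrt (Z₁⁻¹ * Real.exp (-Φ₁ x)) -
      Real.sqrt (Z₂⁻¹ * Real.exp (-Φ₂ x))) ^ 2 ∂μ₀) ≤ Real.exp (5 * K) * δ ^ 2 := by
    calc (∫ x, (Real.sqrt (Z₁⁻¹ * Real.exp (-Φ₁ x)) -
          Real.sqrt (Z₂⁻¹ * Real.exp (-Φ₂ x))) ^ 2 ∂μ₀)
        ≤ ∫ _x, Real.exp (5 * K) * δ ^ 2 ∂μ₀ :=
          integral_mono_of_nonneg (ae_of_all _ fun x => sq_nonneg _) hIconst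
            (ae_of_all _ hpt)
      _ = Real.exp (5 * K) * δ ^ 2 := by simp
  have hnn : 0 ≤ ∫ x, (Real.sqrt (Z₁⁻¹ * Real.exp (-Φ₁ x)) -
      Real.sqrt (Z₂⁻¹ * Real.exp (-Φ₂ x))) ^ 2 ∂μ₀ :=
    integral_nonneg fun x => sq_nonneg _
  linarith
end

section
/- Let u: Ω → ℝ be continuous on a measure space Ω with finitely many level values c₀ < c₁ < ⋯ < c_M, define H(u) = Σ_{i=1}^M aᵢ·𝟙{c_{i−1} ≤ u < cᵢ}, and assume each level set {x : u(x) = cᵢ} has Lebesgue measure zero. If uₙ → u uniformly on Ω, then H(uₙ) → H(u) in measure. -/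
open MeasureTheory Filter Topology

lemma aux_le_iff {δ v w t : ℝ} (h1 : δ ≤ |v - t|) (h2 : |w - v| < δ) :
    (t ≤ w ↔ t ≤ v) := by
  have h2' := abs_lt.mp h2
  have h0 := abs_nonneg (w - v)
  rcases le_abs.mp h1 with h | h
  · constructor <;> intro _ <;> linarith
  · rw [neg_sub] at h
    constructor <;> intro _ <;> linarith

/-- The level-set map `H` sending a level-set function `u` to the piecewise
constant function with value `a i` on the region `{c i ≤ u < c (i+1)}`. -/
noncomputable def levelSetMap {M : ℕ} (c : Fin (M + 1) → ℝ) (a : Fin M → ℝ)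
    (u : EuclideanSpace ℝ (Fin 2) → ℝ) (x : EuclideanSpace ℝ (Fin 2)) : ℝ :=
  ∑ i : Fin M, if c i.castSucc ≤ u x ∧ u x < c i.succ then a i else 0

lemma aux_eq {M : ℕ} (c : Fin (M + 1) → ℝ) (a : Fin M → ℝ)
    (u v : EuclideanSpace ℝ (Fin 2) → ℝ) (x : EuclideanSpace ℝ (Fin 2)) {δ : ℝ}
    (hd : ∀ i : Fin (M + 1), δ ≤ dist (u x) (c i)) (hv : dist (v x) (u x) < δ) :
    levelSetMap c a v x = levelSetMap c a u x := by
  unfold levelSetMap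
  refine Finset.sum_congr rfl fun i _ => ?_
  congr 1
  rw [Real.dist_eq] at hv
  have h1 : (c i.castSucc ≤ v x ↔ c i.castSucc ≤ u x) :=
    aux_le_iff (by simpa [Real.dist_eq] using hd i.castSucc) hv
  have h2 : (v x < c i.succ ↔ u x < c i.succ) := by
    rw [← not_le, ← not_le]
    exact not_congr (aux_le_iff (by simpa [Real.dist_eq] using hd i.succ) hv)
  simp [h1, h2]

theorem levelSetMap_continuous_in_measure {M : ℕ}
    (Ω : Set (EuclideanSpace ℝ (Fin 2))) (hΩm : MeasurableSet Ω)
    (hΩb : Bornology.IsBounded Ω)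
    (c : Fin (M + 1) → ℝ) (hc : StrictMono c) (a : Fin M → ℝ)
    (u : EuclideanSpace ℝ (Fin 2) → ℝ) (hu : ContinuousOn u Ω)
    (hlevel : ∀ i : Fin (M + 1), volume {x | x ∈ Ω ∧ u x = c i} = 0)
    (un : ℕ → EuclideanSpace ℝ (Fin 2) → ℝ)
    (huconv : TendstoUniformlyOn un u atTop Ω) :
    TendstoInMeasure (volume.restrict Ω)
      (fun n => levelSetMap c a (un n)) atTop (levelSetMap c a u) := by
  intro ε hε
  rw [ENNReal.tendsto_nhds_zero]
  intro η hη
  -- the "near a level" sets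
  set F : ℕ → Set (EuclideanSpace ℝ (Fin 2)) :=
    fun n => ⋃ i : Fin (M + 1), u ⁻¹' Metric.ball (c i) (1 / (n + 1)) ∩ Ω with hFdef
  have hFΩ : ∀ n, F n ⊆ Ω := fun n => Set.iUnion_subset fun i => Set.inter_subset_right
  have hFm : ∀ n, MeasurableSet (F n) := by
    intro n
    refine MeasurableSet.iUnion fun i => ?_
    obtain ⟨U, hU, hUeq⟩ := (continuousOn_iff'.mp hu) (Metric.ball (c i) (1 / (n + 1)))
      Metric.isOpen_ball
    rw [hUeq]
    exact hU.measurableSet.inter hΩm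
  have hFanti : Antitone F := by
    intro m n hmn
    refine Set.iUnion_mono fun i => Set.inter_subset_inter_left _ ?_
    refine Set.preimage_mono (Metric.ball_subset_ball ?_)
    have : (m : ℝ) + 1 ≤ (n : ℝ) + 1 := by exact_mod_cast Nat.succ_le_succ hmn
    exact one_div_le_one_div_of_le (by positivity) this
  have hiInter : volume (⋂ n, F n) = 0 := by
    have hsub : (⋂ n, F n) ⊆ ⋃ i : Fin (M + 1), {x | x ∈ Ω ∧ u x = c i} := by
      intro x hx
      have hxΩ : x ∈ Ω := hFΩ 0 (Set.mem_iInter.mp hx 0)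
      by_contra hxc
      simp only [Set.mem_iUnion, Set.mem_setOf_eq, not_exists, not_and] at hxc
      have hpos : ∀ i : Fin (M + 1), 0 < dist (u x) (c i) := fun i =>
        dist_pos.mpr (hxc i hxΩ)
      obtain ⟨i0, -, hi0⟩ := Finset.exists_min_image Finset.univ
        (fun i => dist (u x) (c i)) ⟨0, Finset.mem_univ 0⟩
      obtain ⟨n, hn⟩ := exists_nat_one_div_lt (hpos i0)
      obtain ⟨i, hi⟩ := Set.mem_iUnion.mp (Set.mem_iInter.mp hx n)
      have := hi.1
      simp only [Set.mem_preimage, Metric.mem_ball] at this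
      exact absurd this (not_lt.mpr (le_of_lt (lt_of_lt_of_le hn (hi0 i (Finset.mem_univ i)))))
    refine le_antisymm ?_ zero_le
    calc volume (⋂ n, F n) ≤ volume (⋃ i : Fin (M + 1), {x | x ∈ Ω ∧ u x = c i}) :=
          measure_mono hsub
      _ = 0 := measure_iUnion_null hlevel
  have htend : Tendsto (fun n => volume (F n)) atTop (𝓝 0) := by
    have := tendsto_measure_iInter_atTop (μ := volume)
      (fun n => (hFm n).nullMeasurableSet) hFanti
      ⟨0, ((measure_mono (hFΩ 0)).trans_lt hΩb.measure_lt_top).ne⟩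
    rwa [hiInter] at this
  obtain ⟨N, hN⟩ := (ENNReal.tendsto_nhds_zero.mp htend η hη).exists
  set δ : ℝ := 1 / (N + 1) with hδdef
  have hδpos : 0 < δ := by positivity
  have hev := (Metric.tendstoUniformlyOn_iff.mp huconv) δ hδpos
  filter_upwards [hev] with n hn
  rw [Measure.restrict_apply' hΩm]
  refine le_trans (measure_mono ?_) hN
  rintro x ⟨hxb, hxΩ⟩
  simp only [Set.mem_setOf_eq] at hxb
  by_contra hxF
  have hd : ∀ i : Fin (M + 1), δ ≤ dist (u x) (c i) := by
    intro i
    by_contra hdi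
    exact hxF (Set.mem_iUnion.mpr ⟨i, ⟨Metric.mem_ball.mpr (not_le.mp hdi), hxΩ⟩⟩)
  have heq := aux_eq c a u (un n) x hd (by rw [dist_comm]; exact hn x hxΩ)
  rw [heq] at hxb
  simp at hxb
  exact absurd hxb hε.ne'
end
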